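/- Let C ⊆ [q]^n be a code with minimum Hamming distance d(C) > ⌊n/(r-1)⌋, where r ≥ 3. Then C is r-focal-free: C contains no r distinct vectors x⁰, x¹, ..., x^{r-1} such that for every coordinate i ∈ [n], at least r-2 of the vectors x¹, ..., x^{r-1} agree with x⁰ in coordinate i. -/
import Mathlib


open Finset

/-- A code `C ⊆ [q]^n` is `r`-focal-free if it contains no `r` distinct vectors
`x 0, ..., x (r-1)` such that in every coordinate, at least `r - 2` of
`x 1, ..., x (r-1)` agree with the focus `x 0`. -/
def IsFocalFreeCode (r n q : ℕ) (C : Finset (Fin n → Fin q)) : Prop :=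
  ¬ ∃ (x₀ : Fin n → Fin q) (x : Fin (r - 1) → (Fin n → Fin q)), x₀ ∈ C ∧ (∀ j, x j ∈ C) ∧
      Function.Injective x ∧ (∀ j, x j ≠ x₀) ∧
      ∀ i : Fin n, r - 2 ≤ (Finset.univ.filter fun j : Fin (r - 1) => x j i = x₀ i).card

/-- A code with minimum Hamming distance greater than ⌊n/(r-1)⌋ is r-focal-free. -/
theorem large_distance_implies_focal_free {n q r : ℕ} (hr : 3 ≤ r)
    (C : Finset (Fin n → Fin q))
    (hdist : ∀ x ∈ C, ∀ y ∈ C, x ≠ y →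
      n / (r - 1) < (Finset.univ.filter fun i : Fin n => x i ≠ y i).card) :
    IsFocalFreeCode r n q C := by
  rintro ⟨x₀, x, hx₀, hx, hinj, hne, hagree⟩
  have hr1 : 0 < r - 1 := by omega
  have hsum : ∑ j : Fin (r - 1),
      (Finset.univ.filter fun i : Fin n => x j i ≠ x₀ i).card ≤ n := by
    calc ∑ j : Fin (r - 1), (Finset.univ.filter fun i : Fin n => x j i ≠ x₀ i).card
        = ∑ i : Fin n, (Finset.univ.filter fun j : Fin (r - 1) => x j i ≠ x₀ i).card := by
          simp_rw [Finset.card_filter]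
          rw [Finset.sum_comm]
      _ ≤ ∑ _i : Fin n, 1 := by
          apply Finset.sum_le_sum
          intro i _
          have h1 := hagree i
          have h2 : (Finset.univ.filter fun j : Fin (r - 1) => x j i = x₀ i).card +
              (Finset.univ.filter fun j : Fin (r - 1) => ¬ x j i = x₀ i).card = r - 1 := by
            rw [Finset.card_filter_add_card_filter_not]
            simp
          simp only [ne_eq]
          omega
      _ = n := by simp
  have hlow : ∃ j : Fin (r - 1),
      (Finset.univ.filter fun i : Fin n => x j i ≠ x₀ i).card ≤ n / (r - 1) := by
    by_contra h
    push_neg at h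
    have hle : ∀ j ∈ (Finset.univ : Finset (Fin (r - 1))),
        n / (r - 1) + 1 ≤ (Finset.univ.filter fun i : Fin n => x j i ≠ x₀ i).card :=
      fun j _ => h j
    have := Finset.sum_le_sum hle
    simp only [Finset.sum_const, Finset.card_univ, Fintype.card_fin, smul_eq_mul] at this
    have hmod : n % (r - 1) < r - 1 := Nat.mod_lt _ hr1
    have hdivmul : (r - 1) * (n / (r - 1)) + n % (r - 1) = n := Nat.div_add_mod n (r - 1)
    nlinarith [hsum, this]
  obtain ⟨j, hj⟩ := hlow
  have := hdist (x j) (hx j) x₀ hx₀ (hne j)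
  omega
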